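/- Let a, b : ℝ with a > 0 and b > 0. Then a·log(a/(a+b)) + b·log(b/(a+b)) is the greatest value of the function γ ↦ −(a·log(1 + exp(−γ)) + b·log(1 + exp(γ))) over γ ∈ ℝ; that is, IsGreatest (Set.range fun γ : ℝ => −(a * Real.log (1 + Real.exp (−γ)) + b * Real.log (1 + Real.exp γ))) (a * Real.log (a/(a+b)) + b * Real.log (b/(a+b))), with the maximum attained at γ = log(a/b). -/

import Mathlib

private lemma logistic_eval (a b : ℝ) (ha : 0 < a) (hb : 0 < b) :
    -(a * Real.log (1 + Real.exp (-Real.log (a / b))) +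
        b * Real.log (1 + Real.exp (Real.log (a / b)))) =
      a * Real.log (a / (a + b)) + b * Real.log (b / (a + b)) := by
  have hab : 0 < a + b := by linarith
  have hdiv : (0:ℝ) < a / b := div_pos ha hb
  rw [← Real.log_inv, Real.exp_log (by positivity), Real.exp_log hdiv]
  have h1 : 1 + (a / b)⁻¹ = (a + b) / a := by
    field_simp
  have h2 : 1 + a / b = (a + b) / b := by
    field_simp; ring
  rw [h1, h2, Real.log_div (by positivity) ha.ne', Real.log_div (by positivity) hb.ne',
    Real.log_div ha.ne' hab.ne', Real.log_div hb.ne' hab.ne']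
  ring

private lemma logistic_ub (a b γ : ℝ) (ha : 0 < a) (hb : 0 < b) :
    -(a * Real.log (1 + Real.exp (-γ)) + b * Real.log (1 + Real.exp γ)) ≤
      a * Real.log (a / (a + b)) + b * Real.log (b / (a + b)) := by
  have hab : 0 < a + b := by linarith
  set x := 1 + Real.exp (-γ) with hxdef
  set y := 1 + Real.exp γ with hydef
  have hx : 0 < x := by positivity
  have hy : 0 < y := by positivity
  -- key identity: 1/x + 1/y = 1
  have hxy : 1 / x + 1 / y = 1 := by
    have hE : Real.exp (-γ) = (Real.exp γ)⁻¹ := Real.exp_neg γ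
    have hEγ : 0 < Real.exp γ := Real.exp_pos γ
    rw [hxdef, hydef, hE]
    field_simp
    ring
  set X := a * x / (a + b) with hXdef
  set Y := b * y / (a + b) with hYdef
  have hX : 0 < X := by positivity
  have hY : 0 < Y := by positivity
  have h1 : Real.log X⁻¹ ≤ X⁻¹ - 1 := Real.log_le_sub_one_of_pos (by positivity)
  have h2 : Real.log Y⁻¹ ≤ Y⁻¹ - 1 := Real.log_le_sub_one_of_pos (by positivity)
  rw [Real.log_inv] at h1 h2
  have hXlog : Real.log X = Real.log a + Real.log x - Real.log (a + b) := by
    rw [hXdef, Real.log_div (by positivity) hab.ne', Real.log_mul ha.ne' hx.ne']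
  have hYlog : Real.log Y = Real.log b + Real.log y - Real.log (a + b) := by
    rw [hYdef, Real.log_div (by positivity) hab.ne', Real.log_mul hb.ne' hy.ne']
  have hXinv : a * X⁻¹ = (a + b) / x := by
    rw [hXdef]; field_simp
  have hYinv : b * Y⁻¹ = (a + b) / y := by
    rw [hYdef]; field_simp
  have hsum : a * X⁻¹ + b * Y⁻¹ = a + b := by
    rw [hXinv, hYinv]
    have := hxy
    field_simp at this ⊢
    have hEE : Real.exp γ * Real.exp (-γ) = 1 := by rw [← Real.exp_add]; simp
    linear_combination (a + b) * this + (a + b - 1) * hEE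
  -- a*log X + b*log Y ≥ a - a*X⁻¹ + b - b*Y⁻¹ = 0
  have key : 0 ≤ a * Real.log X + b * Real.log Y := by
    nlinarith [mul_le_mul_of_nonneg_left h1 ha.le, mul_le_mul_of_nonneg_left h2 hb.le]
  rw [Real.log_div ha.ne' hab.ne', Real.log_div hb.ne' hab.ne']
  rw [hXlog, hYlog] at key
  nlinarith [key]

theorem logistic_loss_supremum
    (a b : ℝ) (ha : 0 < a) (hb : 0 < b) :
    IsGreatest
        (Set.range fun γ : ℝ =>
          -(a * Real.log (1 + Real.exp (-γ)) + b * Real.log (1 + Real.exp γ)))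
        (a * Real.log (a / (a + b)) + b * Real.log (b / (a + b))) ∧
      (fun γ : ℝ =>
          -(a * Real.log (1 + Real.exp (-γ)) + b * Real.log (1 + Real.exp γ)))
          (Real.log (a / b)) =
        a * Real.log (a / (a + b)) + b * Real.log (b / (a + b)) := by
  refine ⟨⟨⟨Real.log (a / b), logistic_eval a b ha hb⟩, ?_⟩, logistic_eval a b ha hb⟩
  rintro _ ⟨γ, rfl⟩
  exact logistic_ub a b γ ha hb
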